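/- Every orientation of the complete graph K_4 on four vertices admits a pushable homomorphism to the Paley tournament Pal_7. -/

import Mathlib

/-- An oriented graph: a loopless directed graph without opposite arcs. -/
structure OrientedGraph (V : Type*) where
  adj : V → V → Prop
  irrefl' : ∀ v, ¬ adj v v
  asymm' : ∀ u v, adj u v → ¬ adj v u

namespace OrientedGraph

variable {V W : Type*}

/-- Pushing a set `S` of vertices reverses every arc with exactly one endpoint in `S`. -/
def push (G : OrientedGraph V) (S : Set V) : OrientedGraph V where
  adj u v := ((u ∈ S ↔ v ∈ S) ∧ G.adj u v) ∨ (¬(u ∈ S ↔ v ∈ S) ∧ G.adj v u)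
  irrefl' v := by
    rintro (⟨_, h⟩ | ⟨h, _⟩)
    · exact G.irrefl' v h
    · exact h Iff.rfl
  asymm' u v := by
    rintro (⟨h1, h2⟩ | ⟨h1, h2⟩) (⟨h3, h4⟩ | ⟨h3, h4⟩)
    · exact G.asymm' u v h2 h4
    · exact h3 h1.symm
    · exact h1 h3.symm
    · exact G.asymm' v u h2 h4

/-- A homomorphism of oriented graphs. -/
def IsHom (G : OrientedGraph V) (H : OrientedGraph W) (f : V → W) : Prop :=
  ∀ u v, G.adj u v → H.adj (f u) (f v)

/-- A pushable homomorphism: a homomorphism from some graph obtained from `G`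
by pushing a set of vertices. -/
def IsPushableHom (G : OrientedGraph V) (H : OrientedGraph W) (f : V → W) : Prop :=
  ∃ S : Set V, IsHom (G.push S) H f

/-- The underlying (simple) undirected graph of an oriented graph. -/
def toSimpleGraph (G : OrientedGraph V) : SimpleGraph V where
  Adj u v := G.adj u v ∨ G.adj v u
  symm := ⟨fun _ _ h => Or.symm h⟩
  loopless := ⟨fun v h => Or.elim h (G.irrefl' v) (G.irrefl' v)⟩

/-- The oriented chromatic number: the least order of an oriented graph that `G`
admits a homomorphism to. -/
noncomputable def orientedChromatic (G : OrientedGraph V) : ℕ :=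
  sInf {n | ∃ (H : OrientedGraph (Fin n)) (f : V → Fin n), IsHom G H f}

/-- The pushable chromatic number: the least order of an oriented graph that `G`
admits a pushable homomorphism to. -/
noncomputable def pushableChromatic (G : OrientedGraph V) : ℕ :=
  sInf {n | ∃ (H : OrientedGraph (Fin n)) (f : V → Fin n), IsPushableHom G H f}

/-- `signedAdj C true u w` means `w ∈ N⁺(u)`; `signedAdj C false u w` means `w ∈ N⁻(u)`. -/
def signedAdj (C : OrientedGraph V) : Bool → V → V → Prop
  | true, u, w => C.adj u w
  | false, u, w => C.adj w u

/-- The `s`-neighborhood of a set of vertices. -/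
def signedNbhd (C : OrientedGraph V) (s : Bool) (S : Set V) : Set V :=
  {w | ∃ u ∈ S, C.signedAdj s u w}

/-- The set `N^a(J)` for a sign vector `a` and a tuple `v` of vertices. -/
def NSet (C : OrientedGraph V) {j : ℕ} (a : Fin j → Bool) (v : Fin j → V) : Set V :=
  {w | (∀ i, C.signedAdj (a i) (v i) w) ∨ (∀ i, C.signedAdj (!(a i)) (v i) w)}

/-- Property `P(j,k)`: for every sign vector `a ∈ {+,-}^j` and every set of `j`
distinct vertices, `|N^a(J)| ≥ k`. -/
def HasPropP (C : OrientedGraph V) (j k : ℕ) : Prop :=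
  ∀ (a : Fin j → Bool) (v : Fin j → V), Function.Injective v → k ≤ (C.NSet a v).ncard

end OrientedGraph

/-- The Paley tournament on `ZMod 7`: `ij` is an arc iff `j - i ∈ {1, 2, 4}`. -/
def Pal7 : OrientedGraph (ZMod 7) where
  adj i j := j - i = 1 ∨ j - i = 2 ∨ j - i = 4
  irrefl' := by decide
  asymm' := by decide

/-- `mad(G) < 3`: every nonempty subgraph `H` satisfies `2|E(H)|/|V(H)| < 3`. -/
def MadLT3 {V : Type*} (G : SimpleGraph V) : Prop :=
  ∀ H : G.Subgraph, H.verts.Nonempty → 2 * H.edgeSet.ncard < 3 * H.verts.ncard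

/-- Degeneracy at most `d`: every nonempty set of vertices contains a vertex with
at most `d` neighbors inside the set. -/
def DegeneracyLE {V : Type*} (G : SimpleGraph V) (d : ℕ) : Prop :=
  ∀ s : Set V, s.Nonempty → ∃ v ∈ s, (s ∩ G.neighborSet v).ncard ≤ d

def pArc (xi xj : ZMod 7) : Prop := xj - xi = 1 ∨ xj - xi = 2 ∨ xj - xi = 4

instance (xi xj : ZMod 7) : Decidable (pArc xi xj) := by unfold pArc; infer_instance

def cnd (t bi bj : Bool) (xi xj : ZMod 7) : Prop :=
  if (bi == bj) == t then pArc xi xj else pArc xj xi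

instance (t bi bj : Bool) (xi xj : ZMod 7) : Decidable (cnd t bi bj xi xj) := by
  unfold cnd; infer_instance

lemma keyLemma (a b c d e g : Bool) :
    ∃ (s1 s2 s3 : Bool) (x1 x2 x3 : ZMod 7),
      cnd a false s1 0 x1 ∧ cnd b false s2 0 x2 ∧ cnd c false s3 0 x3 ∧
      cnd d s1 s2 x1 x2 ∧ cnd e s1 s3 x1 x3 ∧ cnd g s2 s3 x2 x3 :=
  match a, b, c, d, e, g with
  | false, false, false, false, false, false => ⟨false, true, false, 3, 4, 6, by decide, by decide, by decide, by decide, by decide, by decide⟩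
  | false, false, false, false, false, true => ⟨false, false, true, 3, 6, 4, by decide, by decide, by decide, by decide, by decide, by decide⟩
  | false, false, false, false, true, false => ⟨false, false, false, 3, 6, 5, by decide, by decide, by decide, by decide, by decide, by decide⟩
  | false, false, false, false, true, true => ⟨false, false, true, 3, 6, 2, by decide, by decide, by decide, by decide, by decide, by decide⟩
  | false, false, false, true, false, false => ⟨false, true, false, 3, 2, 6, by decide, by decide, by decide, by decide, by decide, by decide⟩
  | false, false, false, true, false, true => ⟨false, false, false, 3, 5, 6, by decide, by decide, by decide, by decide, by decide, by decide⟩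
  | false, false, false, true, true, false => ⟨false, false, true, 3, 5, 2, by decide, by decide, by decide, by decide, by decide, by decide⟩
  | false, false, false, true, true, true => ⟨false, false, true, 3, 5, 1, by decide, by decide, by decide, by decide, by decide, by decide⟩
  | false, false, true, false, false, false => ⟨false, false, false, 3, 6, 2, by decide, by decide, by decide, by decide, by decide, by decide⟩
  | false, false, true, false, false, true => ⟨false, false, false, 3, 6, 1, by decide, by decide, by decide, by decide, by decide, by decide⟩
  | false, false, true, false, true, false => ⟨false, false, false, 3, 6, 4, by decide, by decide, by decide, by decide, by decide, by decide⟩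
  | false, false, true, false, true, true => ⟨false, true, true, 3, 4, 6, by decide, by decide, by decide, by decide, by decide, by decide⟩
  | false, false, true, true, false, false => ⟨false, false, false, 3, 5, 1, by decide, by decide, by decide, by decide, by decide, by decide⟩
  | false, false, true, true, false, true => ⟨false, false, false, 3, 5, 2, by decide, by decide, by decide, by decide, by decide, by decide⟩
  | false, false, true, true, true, false => ⟨false, false, false, 3, 5, 4, by decide, by decide, by decide, by decide, by decide, by decide⟩
  | false, false, true, true, true, true => ⟨false, true, false, 3, 1, 4, by decide, by decide, by decide, by decide, by decide, by decide⟩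
  | false, true, false, false, false, false => ⟨false, false, false, 3, 1, 6, by decide, by decide, by decide, by decide, by decide, by decide⟩
  | false, true, false, false, false, true => ⟨false, false, false, 3, 2, 6, by decide, by decide, by decide, by decide, by decide, by decide⟩
  | false, true, false, false, true, false => ⟨false, false, false, 3, 2, 5, by decide, by decide, by decide, by decide, by decide, by decide⟩
  | false, true, false, false, true, true => ⟨false, false, false, 3, 1, 5, by decide, by decide, by decide, by decide, by decide, by decide⟩
  | false, true, false, true, false, false => ⟨false, true, true, 3, 6, 4, by decide, by decide, by decide, by decide, by decide, by decide⟩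
  | false, true, false, true, false, true => ⟨false, false, false, 3, 4, 6, by decide, by decide, by decide, by decide, by decide, by decide⟩
  | false, true, false, true, true, false => ⟨false, false, true, 3, 4, 1, by decide, by decide, by decide, by decide, by decide, by decide⟩
  | false, true, false, true, true, true => ⟨false, false, false, 3, 4, 5, by decide, by decide, by decide, by decide, by decide, by decide⟩
  | false, true, true, false, false, false => ⟨false, false, false, 3, 2, 1, by decide, by decide, by decide, by decide, by decide, by decide⟩
  | false, true, true, false, false, true => ⟨false, false, false, 3, 1, 2, by decide, by decide, by decide, by decide, by decide, by decide⟩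
  | false, true, true, false, true, false => ⟨false, false, false, 3, 1, 4, by decide, by decide, by decide, by decide, by decide, by decide⟩
  | false, true, true, false, true, true => ⟨false, false, false, 3, 2, 4, by decide, by decide, by decide, by decide, by decide, by decide⟩
  | false, true, true, true, false, false => ⟨false, false, false, 3, 4, 2, by decide, by decide, by decide, by decide, by decide, by decide⟩
  | false, true, true, true, false, true => ⟨false, false, false, 3, 4, 1, by decide, by decide, by decide, by decide, by decide, by decide⟩
  | false, true, true, true, true, false => ⟨false, false, true, 3, 4, 6, by decide, by decide, by decide, by decide, by decide, by decide⟩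
  | false, true, true, true, true, true => ⟨false, true, false, 3, 6, 4, by decide, by decide, by decide, by decide, by decide, by decide⟩
  | true, false, false, false, false, false => ⟨false, true, false, 1, 2, 6, by decide, by decide, by decide, by decide, by decide, by decide⟩
  | true, false, false, false, false, true => ⟨false, false, true, 1, 6, 2, by decide, by decide, by decide, by decide, by decide, by decide⟩
  | true, false, false, false, true, false => ⟨false, false, false, 1, 6, 5, by decide, by decide, by decide, by decide, by decide, by decide⟩
  | true, false, false, false, true, true => ⟨false, false, false, 1, 6, 3, by decide, by decide, by decide, by decide, by decide, by decide⟩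
  | true, false, false, true, false, false => ⟨false, false, false, 1, 3, 6, by decide, by decide, by decide, by decide, by decide, by decide⟩
  | true, false, false, true, false, true => ⟨false, false, false, 1, 5, 6, by decide, by decide, by decide, by decide, by decide, by decide⟩
  | true, false, false, true, true, false => ⟨false, false, false, 1, 5, 3, by decide, by decide, by decide, by decide, by decide, by decide⟩
  | true, false, false, true, true, true => ⟨false, false, false, 1, 3, 5, by decide, by decide, by decide, by decide, by decide, by decide⟩
  | true, false, true, false, false, false => ⟨false, false, false, 1, 6, 4, by decide, by decide, by decide, by decide, by decide, by decide⟩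
  | true, false, true, false, false, true => ⟨false, false, true, 1, 6, 5, by decide, by decide, by decide, by decide, by decide, by decide⟩
  | true, false, true, false, true, false => ⟨false, false, false, 1, 6, 2, by decide, by decide, by decide, by decide, by decide, by decide⟩
  | true, false, true, false, true, true => ⟨false, true, true, 1, 2, 6, by decide, by decide, by decide, by decide, by decide, by decide⟩
  | true, false, true, true, false, false => ⟨false, false, false, 1, 5, 4, by decide, by decide, by decide, by decide, by decide, by decide⟩
  | true, false, true, true, false, true => ⟨false, false, false, 1, 3, 4, by decide, by decide, by decide, by decide, by decide, by decide⟩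
  | true, false, true, true, true, false => ⟨false, false, false, 1, 3, 2, by decide, by decide, by decide, by decide, by decide, by decide⟩
  | true, false, true, true, true, true => ⟨false, false, false, 1, 5, 2, by decide, by decide, by decide, by decide, by decide, by decide⟩
  | true, true, false, false, false, false => ⟨false, true, false, 1, 5, 6, by decide, by decide, by decide, by decide, by decide, by decide⟩
  | true, true, false, false, false, true => ⟨false, false, false, 1, 4, 6, by decide, by decide, by decide, by decide, by decide, by decide⟩
  | true, true, false, false, true, false => ⟨false, false, false, 1, 4, 3, by decide, by decide, by decide, by decide, by decide, by decide⟩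
  | true, true, false, false, true, true => ⟨false, false, false, 1, 4, 5, by decide, by decide, by decide, by decide, by decide, by decide⟩
  | true, true, false, true, false, false => ⟨false, true, true, 1, 6, 2, by decide, by decide, by decide, by decide, by decide, by decide⟩
  | true, true, false, true, false, true => ⟨false, false, false, 1, 2, 6, by decide, by decide, by decide, by decide, by decide, by decide⟩
  | true, true, false, true, true, false => ⟨false, false, false, 1, 2, 5, by decide, by decide, by decide, by decide, by decide, by decide⟩
  | true, true, false, true, true, true => ⟨false, false, false, 1, 2, 3, by decide, by decide, by decide, by decide, by decide, by decide⟩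
  | true, true, true, false, false, false => ⟨false, false, true, 1, 4, 5, by decide, by decide, by decide, by decide, by decide, by decide⟩
  | true, true, true, false, false, true => ⟨false, false, true, 1, 4, 3, by decide, by decide, by decide, by decide, by decide, by decide⟩
  | true, true, true, false, true, false => ⟨false, false, false, 1, 4, 2, by decide, by decide, by decide, by decide, by decide, by decide⟩
  | true, true, true, false, true, true => ⟨false, true, false, 1, 3, 2, by decide, by decide, by decide, by decide, by decide, by decide⟩
  | true, true, true, true, false, false => ⟨false, false, true, 1, 2, 3, by decide, by decide, by decide, by decide, by decide, by decide⟩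
  | true, true, true, true, false, true => ⟨false, false, false, 1, 2, 4, by decide, by decide, by decide, by decide, by decide, by decide⟩
  | true, true, true, true, true, false => ⟨false, false, true, 1, 2, 6, by decide, by decide, by decide, by decide, by decide, by decide⟩
  | true, true, true, true, true, true => ⟨false, true, false, 1, 6, 2, by decide, by decide, by decide, by decide, by decide, by decide⟩

lemma helperPair {P Q IM JM : Prop} [Decidable P]
    {bi bj : Bool} {xi xj : ZMod 7}
    (hQP : Q → ¬ P)
    (hi : IM ↔ bi = true) (hj : JM ↔ bj = true)
    (hcnd : cnd (decide P) bi bj xi xj) :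
    ((((IM ↔ JM) ∧ P) ∨ (¬(IM ↔ JM) ∧ Q)) → pArc xi xj) ∧
    ((((JM ↔ IM) ∧ Q) ∨ (¬(JM ↔ IM) ∧ P)) → pArc xj xi) := by
  unfold cnd at hcnd
  constructor
  · rintro (⟨hiff, hp⟩ | ⟨hniff, hq⟩)
    · have hb : bi = bj := by rw [hi, hj] at hiff; cases bi <;> cases bj <;> simp_all
      rw [hb, decide_eq_true hp] at hcnd; simpa using hcnd
    · have hb : (bi == bj) = false := by
        rw [hi, hj] at hniff; cases bi <;> cases bj <;> simp_all
      rw [hb, decide_eq_false (hQP hq)] at hcnd; simpa using hcnd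
  · rintro (⟨hiff, hq⟩ | ⟨hniff, hp⟩)
    · have hb : bi = bj := by rw [hi, hj] at hiff; cases bi <;> cases bj <;> simp_all
      rw [hb, decide_eq_false (hQP hq)] at hcnd; simpa using hcnd
    · have hb : (bi == bj) = false := by
        rw [hi, hj] at hniff; cases bi <;> cases bj <;> simp_all
      rw [hb, decide_eq_true hp] at hcnd; simpa using hcnd

theorem k4_pushableHom_pal7'
    (G : OrientedGraph (Fin 4)) (h : G.toSimpleGraph = ⊤) :
    ∃ f : Fin 4 → ZMod 7, G.IsPushableHom Pal7 f := by
  classical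
  obtain ⟨s1, s2, s3, x1, x2, x3, c01, c02, c03, c12, c13, c23⟩ :=
    keyLemma (decide (G.adj 0 1)) (decide (G.adj 0 2)) (decide (G.adj 0 3))
      (decide (G.adj 1 2)) (decide (G.adj 1 3)) (decide (G.adj 2 3))
  set b : Fin 4 → Bool := ![false, s1, s2, s3] with hb
  set S : Set (Fin 4) := {v | b v = true} with hS
  refine ⟨![0, x1, x2, x3], S, ?_⟩
  have m0 : ((0 : Fin 4) ∈ S) ↔ false = true := Iff.rfl
  have m1 : ((1 : Fin 4) ∈ S) ↔ s1 = true := Iff.rfl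
  have m2 : ((2 : Fin 4) ∈ S) ↔ s2 = true := Iff.rfl
  have m3 : ((3 : Fin 4) ∈ S) ↔ s3 = true := Iff.rfl
  have h01 := helperPair (G.asymm' 1 0) m0 m1 c01
  have h02 := helperPair (G.asymm' 2 0) m0 m2 c02
  have h03 := helperPair (G.asymm' 3 0) m0 m3 c03
  have h12 := helperPair (G.asymm' 2 1) m1 m2 c12
  have h13 := helperPair (G.asymm' 3 1) m1 m3 c13
  have h23 := helperPair (G.asymm' 3 2) m2 m3 c23
  intro u v hp
  fin_cases u <;> fin_cases v
  · exact absurd hp ((G.push S).irrefl' _)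
  · exact h01.1 hp
  · exact h02.1 hp
  · exact h03.1 hp
  · exact h01.2 hp
  · exact absurd hp ((G.push S).irrefl' _)
  · exact h12.1 hp
  · exact h13.1 hp
  · exact h02.2 hp
  · exact h12.2 hp
  · exact absurd hp ((G.push S).irrefl' _)
  · exact h23.1 hp
  · exact h03.2 hp
  · exact h13.2 hp
  · exact h23.2 hp
  · exact absurd hp ((G.push S).irrefl' _)

/-- Every orientation of `K₄` admits a pushable homomorphism to `Pal7`. -/
theorem k4_pushableHom_pal7
    (G : OrientedGraph (Fin 4)) (h : G.toSimpleGraph = ⊤) :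
    ∃ f : Fin 4 → ZMod 7, G.IsPushableHom Pal7 f :=
  k4_pushableHom_pal7' G h
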